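/- Fix c > 1. For each integer n ≥ 1, the translation operator T_{log n} is bounded on H_c with operator norm n^{−c}, and the series A := ∑_{n=1}^∞ T_{log n} converges absolutely in the operator norm of bounded operators on H_c, defining a bounded linear operator A with ‖A‖ ≤ ζ(c); explicitly, (A f)(t) = ∑_{n=1}^∞ f(t − log n) for f ∈ H_c. -/

import Mathlib

open MeasureTheory Filter
open Real Topology
open scoped ENNReal NNReal

/-- The weighted measure defining the Hilbert space `H_c = L²(ℝ, e^{−2ct} dt)`. -/
noncomputable def weightedMeasure (c : ℝ) : Measure ℝ :=
  (volume : Measure ℝ).withDensity fun t => ENNReal.ofReal (Real.exp (-2 * c * t))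

lemma weighted_lintegral (c : ℝ) (g : ℝ → ℝ≥0∞) :
    ∫⁻ t, g t ∂(weightedMeasure c)
      = ∫⁻ t, ENNReal.ofReal (Real.exp (-2 * c * t)) * g t ∂(volume : Measure ℝ) := by
  rw [weightedMeasure, lintegral_withDensity_eq_lintegral_mul_non_measurable]
  · rfl
  · exact ENNReal.measurable_ofReal.comp (Real.measurable_exp.comp (measurable_const.mul measurable_id))
  · exact Eventually.of_forall fun x => ENNReal.ofReal_lt_top

lemma key_lintegral (c h : ℝ) (g : ℝ → ℂ) :
    ∫⁻ t, (‖g (t - h)‖₊ : ℝ≥0∞) ^ (2 : ℝ) ∂(weightedMeasure c)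
      = ENNReal.ofReal (Real.exp (-2 * c * h))
        * ∫⁻ t, (‖g t‖₊ : ℝ≥0∞) ^ (2 : ℝ) ∂(weightedMeasure c) := by
  rw [weighted_lintegral, weighted_lintegral, ← lintegral_const_mul' _ _ ENNReal.ofReal_ne_top]
  calc ∫⁻ t, ENNReal.ofReal (Real.exp (-2 * c * t)) * (‖g (t - h)‖₊ : ℝ≥0∞) ^ (2:ℝ) ∂volume
      = ∫⁻ t, ENNReal.ofReal (Real.exp (-2 * c * (t + h))) * (‖g (t + h - h)‖₊ : ℝ≥0∞) ^ (2:ℝ) ∂volume := by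
        exact (lintegral_add_right_eq_self
          (fun t => ENNReal.ofReal (Real.exp (-2 * c * t)) * (‖g (t - h)‖₊ : ℝ≥0∞) ^ (2:ℝ)) h).symm
    _ = ∫⁻ t, ENNReal.ofReal (Real.exp (-2 * c * h))
          * (ENNReal.ofReal (Real.exp (-2 * c * t)) * (‖g t‖₊ : ℝ≥0∞) ^ (2:ℝ)) ∂volume := by
        congr 1; funext t
        rw [add_sub_cancel_right, ← mul_assoc, ← ENNReal.ofReal_mul (Real.exp_pos _).le,
          ← Real.exp_add]
        ring_nf

lemma enorm_sq_lintegral {E : Type*} [NormedAddCommGroup E] (g : ℝ → E) (μ : Measure ℝ) :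
    eLpNorm g 2 μ = (∫⁻ t, (‖g t‖₊ : ℝ≥0∞) ^ (2 : ℝ) ∂μ) ^ (1/2 : ℝ) := by
  rw [eLpNorm_eq_lintegral_rpow_enorm_toReal two_ne_zero ENNReal.ofNat_ne_top]
  simp only [enorm_eq_nnnorm]
  norm_num

lemma key_eLpNorm (c h : ℝ) (g : ℝ → ℂ) :
    eLpNorm (fun t => g (t - h)) 2 (weightedMeasure c)
      = ENNReal.ofReal (Real.exp (-(c * h))) * eLpNorm g 2 (weightedMeasure c) := by
  rw [enorm_sq_lintegral, enorm_sq_lintegral, key_lintegral,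
    ENNReal.mul_rpow_of_nonneg _ _ (by norm_num : (0:ℝ) ≤ 1/2),
    ENNReal.ofReal_rpow_of_pos (Real.exp_pos _), ← Real.exp_mul]
  congr 2
  ring

lemma weightedMeasure_Ioo_ne_top (c : ℝ) (hc : 0 < c) :
    weightedMeasure c (Set.Ioo 0 1) ≠ ∞ := by
  rw [weightedMeasure, withDensity_apply _ measurableSet_Ioo]
  have : ∫⁻ t in Set.Ioo (0:ℝ) 1, ENNReal.ofReal (Real.exp (-2 * c * t)) ∂volume
      ≤ ∫⁻ _ in Set.Ioo (0:ℝ) 1, 1 ∂volume := by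
    refine setLIntegral_mono' measurableSet_Ioo fun t ht => ?_
    refine ENNReal.ofReal_le_of_le_toReal ?_
    simp only [ENNReal.toReal_one]
    rw [← Real.exp_zero]
    exact Real.exp_le_exp.2 (by nlinarith [ht.1])
  refine (lt_of_le_of_lt this ?_).ne
  simp [Real.volume_Ioo]

lemma weightedMeasure_Ioo_ne_zero (c : ℝ) :
    weightedMeasure c (Set.Ioo 0 1) ≠ 0 := by
  rw [weightedMeasure, withDensity_apply _ measurableSet_Ioo]
  intro hzero
  have : ∫⁻ _ in Set.Ioo (0:ℝ) 1, ENNReal.ofReal (Real.exp (-(2 * |c| + 1))) ∂volume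
      ≤ ∫⁻ t in Set.Ioo (0:ℝ) 1, ENNReal.ofReal (Real.exp (-2 * c * t)) ∂volume := by
    refine setLIntegral_mono' measurableSet_Ioo fun t ht => ?_
    refine ENNReal.ofReal_le_ofReal (Real.exp_le_exp.2 ?_)
    have h1 : |(-2) * c * t| ≤ 2 * |c| := by
      rw [abs_mul, abs_mul, abs_of_pos ht.1, abs_neg, abs_two]
      nlinarith [abs_nonneg c, ht.1, ht.2]
    nlinarith [neg_abs_le ((-2) * c * t)]
  rw [hzero, le_zero_iff] at this
  rw [setLIntegral_const, Real.volume_Ioo, mul_eq_zero] at this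
  rcases this with h | h
  · exact absurd h (by simp [ENNReal.ofReal_eq_zero, Real.exp_pos, not_le])
  · simp at h

lemma exp_neg_mul_log (c : ℝ) (n : ℕ) :
    Real.exp (-(c * Real.log ((n:ℝ) + 1))) = ((n : ℝ) + 1) ^ (-c) := by
  rw [Real.rpow_def_of_pos (by positivity)]
  ring_nf

lemma summable_aux {c : ℝ} (hc : 1 < c) :
    Summable (fun n : ℕ => ((n : ℝ) + 1) ^ (-c)) := by
  have := (summable_nat_add_iff 1).2 (Real.summable_nat_rpow.2 (by linarith : -c < -1))
  simpa using this

lemma zeta_re_eq {c : ℝ} (hc : 1 < c) :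
    (riemannZeta (c : ℂ)).re = ∑' n : ℕ, ((n : ℝ) + 1) ^ (-c) := by
  have hre : 1 < (c : ℂ).re := by simpa using hc
  have hterm : ∀ n : ℕ, (1 : ℂ) / ((n : ℂ) + 1) ^ (c : ℂ)
      = ((((n : ℝ) + 1) ^ (-c) : ℝ) : ℂ) := by
    intro n
    have h1 : ((n : ℂ) + 1) = ((((n : ℝ) + 1) : ℝ) : ℂ) := by push_cast; ring
    rw [h1, ← Complex.ofReal_cpow (by positivity)]
    rw [Real.rpow_neg (by positivity)]
    push_cast
    rw [one_div]
  rw [zeta_eq_tsum_one_div_nat_add_one_cpow hre]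
  rw [tsum_congr hterm, ← Complex.ofReal_tsum, Complex.ofReal_re]

/-- **Quantized Dirichlet series for the spectral operator** (Theorem 4.5): for `c > 1`,
given the translation operators `T_h` on `H_c` (characterized by `(T_h f)(t) = f(t − h)`
a.e.), each `T_{log n}` has operator norm `n^{−c}`, the series `A = ∑_{n≥1} T_{log n}`
converges absolutely in operator norm with `‖A‖ ≤ ζ(c)`, and
`(A f)(t) = ∑_{n≥1} f(t − log n)` a.e., for every `f ∈ H_c`. -/
theorem quantized_dirichlet_series (c : ℝ) (hc : 1 < c)
    (T : ℝ → Lp ℂ 2 (weightedMeasure c) →L[ℂ] Lp ℂ 2 (weightedMeasure c))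
    (hT : ∀ (h : ℝ) (f : Lp ℂ 2 (weightedMeasure c)),
      (T h f : ℝ → ℂ) =ᵐ[weightedMeasure c] fun t => f (t - h)) :
    (∀ n : ℕ, ‖T (Real.log (n + 1))‖ = ((n : ℝ) + 1) ^ (-c)) ∧
    Summable (fun n : ℕ => ‖T (Real.log (n + 1))‖) ∧
    Summable (fun n : ℕ => T (Real.log (n + 1))) ∧
    ‖∑' n : ℕ, T (Real.log (n + 1))‖ ≤ (riemannZeta (c : ℂ)).re ∧
    ∀ f : Lp ℂ 2 (weightedMeasure c),
      ((∑' n : ℕ, T (Real.log (n + 1))) f : ℝ → ℂ) =ᵐ[weightedMeasure c]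
        fun t => ∑' n : ℕ, f (t - Real.log (n + 1)) := by
  -- norm of T h applied to f
  have normTf : ∀ (h : ℝ) (f : Lp ℂ 2 (weightedMeasure c)), ‖T h f‖ = Real.exp (-(c * h)) * ‖f‖ := by
    intro h f
    rw [Lp.norm_def, Lp.norm_def, eLpNorm_congr_ae (hT h f), key_eLpNorm,
      ENNReal.toReal_mul, ENNReal.toReal_ofReal (Real.exp_pos _).le]
  -- operator norm of T h
  have normT : ∀ h : ℝ, ‖T h‖ = Real.exp (-(c * h)) := by
    intro h
    refine le_antisymm (ContinuousLinearMap.opNorm_le_bound _ (Real.exp_pos _).le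
      fun f => le_of_eq (normTf h f)) ?_
    set f₀ : Lp ℂ 2 (weightedMeasure c) := indicatorConstLp 2 measurableSet_Ioo
      (weightedMeasure_Ioo_ne_top c (by linarith)) (1 : ℂ) with hf₀def
    have hf₀ : ‖f₀‖ ≠ 0 := by
      rw [hf₀def, norm_indicatorConstLp two_ne_zero ENNReal.ofNat_ne_top]
      have hpos : 0 < (weightedMeasure c (Set.Ioo 0 1)).toReal :=
        ENNReal.toReal_pos (weightedMeasure_Ioo_ne_zero c)
          (weightedMeasure_Ioo_ne_top c (by linarith))
      simp only [norm_one, one_mul]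
      positivity
    calc Real.exp (-(c * h)) = ‖T h f₀‖ / ‖f₀‖ := by
          rw [normTf]; field_simp
      _ ≤ ‖T h‖ := ContinuousLinearMap.ratio_le_opNorm _ f₀
  have hnorm_log : ∀ n : ℕ, ‖T (Real.log ((n : ℝ) + 1))‖ = ((n : ℝ) + 1) ^ (-c) := by
    intro n; rw [normT, exp_neg_mul_log]
  have hσ := summable_aux hc
  have hs1 : Summable (fun n : ℕ => ‖T (Real.log ((n : ℝ) + 1))‖) :=
    hσ.congr fun n => (hnorm_log n).symm
  have hs2 : Summable (fun n : ℕ => T (Real.log ((n : ℝ) + 1))) := hs1.of_norm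
  refine ⟨hnorm_log, hs1, hs2, ?_, ?_⟩
  · calc ‖∑' n : ℕ, T (Real.log ((n : ℝ) + 1))‖
        ≤ ∑' n : ℕ, ‖T (Real.log ((n : ℝ) + 1))‖ := norm_tsum_le_tsum_norm hs1
      _ = ∑' n : ℕ, ((n : ℝ) + 1) ^ (-c) := tsum_congr hnorm_log
      _ = (riemannZeta (c : ℂ)).re := (zeta_re_eq hc).symm
  · intro f
    set F : ℕ → ℝ → ℂ := fun n t => (f : ℝ → ℂ) (t - Real.log ((n : ℝ) + 1)) with hFdef
    have hFcongr : ∀ n : ℕ, (T (Real.log ((n : ℝ) + 1)) f : ℝ → ℂ) =ᵐ[weightedMeasure c] F n :=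
      fun n => hT _ f
    have hFmeas : ∀ n, AEStronglyMeasurable (F n) (weightedMeasure c) :=
      fun n => (Lp.aestronglyMeasurable _).congr (hFcongr n)
    have hFe : ∀ n : ℕ, eLpNorm (F n) 2 (weightedMeasure c)
        = ENNReal.ofReal (((n : ℝ) + 1) ^ (-c)) * eLpNorm (f : ℝ → ℂ) 2 (weightedMeasure c) := by
      intro n
      rw [hFdef]
      rw [key_eLpNorm c (Real.log ((n : ℝ) + 1)) (f : ℝ → ℂ), exp_neg_mul_log]
    set C := ∑' n : ℕ, eLpNorm (F n) 2 (weightedMeasure c) with hCdef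
    have hC_ne_top : C ≠ ∞ := by
      have h1 : C = (∑' n : ℕ, ENNReal.ofReal (((n : ℝ) + 1) ^ (-c)))
          * eLpNorm (f : ℝ → ℂ) 2 (weightedMeasure c) := by
        rw [hCdef, ← ENNReal.tsum_mul_right]; exact tsum_congr hFe
      rw [h1]
      refine ENNReal.mul_ne_top ?_ (Lp.eLpNorm_ne_top f)
      rw [← ENNReal.ofReal_tsum_of_nonneg (fun n => by positivity) hσ]
      exact ENNReal.ofReal_ne_top
    -- partial sums of norms are bounded in L²
    have hpartial : ∀ N : ℕ,
        ∫⁻ t, (∑ k ∈ Finset.range N, (‖F k t‖₊ : ℝ≥0∞)) ^ (2 : ℝ) ∂(weightedMeasure c)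
          ≤ C ^ (2 : ℝ) := by
      intro N
      have h1 : eLpNorm (fun t => ∑ k ∈ Finset.range N, ‖F k t‖) 2 (weightedMeasure c) ≤ C := by
        have h2 := eLpNorm_sum_le (μ := weightedMeasure c) (p := 2)
          (f := fun k (t : ℝ) => ‖F k t‖) (s := Finset.range N)
          (fun k _ => (hFmeas k).norm) one_le_two
        refine le_trans (le_of_eq ?_) (h2.trans ?_)
        · congr 1; funext t; simp [Finset.sum_apply]
        · calc ∑ k ∈ Finset.range N, eLpNorm (fun t => ‖F k t‖) 2 (weightedMeasure c)
              = ∑ k ∈ Finset.range N, eLpNorm (F k) 2 (weightedMeasure c) :=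
                Finset.sum_congr rfl fun k _ => eLpNorm_norm (F k)
            _ ≤ C := ENNReal.sum_le_tsum _
      have hnn : ∀ t : ℝ, (‖∑ k ∈ Finset.range N, ‖F k t‖‖₊ : ℝ≥0∞)
          = ∑ k ∈ Finset.range N, (‖F k t‖₊ : ℝ≥0∞) := by
        intro t
        rw [← enorm_eq_nnnorm, ← ofReal_norm,
          Real.norm_of_nonneg (Finset.sum_nonneg fun k _ => norm_nonneg _),
          ENNReal.ofReal_sum_of_nonneg (fun k _ => norm_nonneg _)]
        exact Finset.sum_congr rfl fun k _ => ofReal_norm _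
      rw [enorm_sq_lintegral] at h1
      have h3 := ENNReal.rpow_le_rpow h1 (by norm_num : (0:ℝ) ≤ 2)
      have h12 : (1/2 : ℝ) * 2 = 1 := by norm_num
      rw [← ENNReal.rpow_mul, h12, ENNReal.rpow_one] at h3
      refine le_trans (le_of_eq ?_) h3
      congr 1; funext t; rw [hnn t]
    -- monotone convergence
    have hBmeas : ∀ N : ℕ, AEMeasurable
        (fun t => (∑ k ∈ Finset.range N, (‖F k t‖₊ : ℝ≥0∞)) ^ (2 : ℝ)) (weightedMeasure c) := by
      intro N
      exact ENNReal.continuous_rpow_const.measurable.comp_aemeasurable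
        (Finset.aemeasurable_fun_sum _ fun k _ => (hFmeas k).enorm)
    have hMCT : ∫⁻ t, ⨆ N : ℕ, (∑ k ∈ Finset.range N, (‖F k t‖₊ : ℝ≥0∞)) ^ (2 : ℝ)
        ∂(weightedMeasure c) ≤ C ^ (2 : ℝ) := by
      rw [lintegral_iSup' hBmeas (Eventually.of_forall fun t => ?_)]
      · exact iSup_le hpartial
      · intro a b hab
        exact ENNReal.rpow_le_rpow
          (Finset.sum_le_sum_of_subset (Finset.range_subset_range.2 hab)) (by norm_num)
    have hae_fin : ∀ᵐ t ∂(weightedMeasure c),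
        (⨆ N : ℕ, (∑ k ∈ Finset.range N, (‖F k t‖₊ : ℝ≥0∞)) ^ (2 : ℝ)) < ∞ := by
      refine ae_lt_top' (AEMeasurable.iSup hBmeas) ?_
      exact ne_top_of_le_ne_top (ENNReal.rpow_ne_top_of_nonneg (by norm_num) hC_ne_top) hMCT
    have hsummable : ∀ᵐ t ∂(weightedMeasure c), Summable fun n : ℕ => ‖F n t‖ := by
      filter_upwards [hae_fin] with t ht
      have hG : (∑' n : ℕ, (‖F n t‖₊ : ℝ≥0∞)) ≠ ∞ := by
        refine ne_top_of_le_ne_top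
          (ENNReal.rpow_ne_top_of_nonneg (by norm_num : (0:ℝ) ≤ 1/2) ht.ne) ?_
        rw [ENNReal.tsum_eq_iSup_nat]
        refine iSup_le fun N => ?_
        have h1 : (∑ k ∈ Finset.range N, (‖F k t‖₊ : ℝ≥0∞)) ^ (2:ℝ)
            ≤ ⨆ N : ℕ, (∑ k ∈ Finset.range N, (‖F k t‖₊ : ℝ≥0∞)) ^ (2 : ℝ) :=
          le_iSup (fun N : ℕ => (∑ k ∈ Finset.range N, (‖F k t‖₊ : ℝ≥0∞)) ^ (2 : ℝ)) N
        calc (∑ k ∈ Finset.range N, (‖F k t‖₊ : ℝ≥0∞))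
            = ((∑ k ∈ Finset.range N, (‖F k t‖₊ : ℝ≥0∞)) ^ (2:ℝ)) ^ (1/2:ℝ) := by
              rw [← ENNReal.rpow_mul]; norm_num
          _ ≤ (⨆ N : ℕ, (∑ k ∈ Finset.range N, (‖F k t‖₊ : ℝ≥0∞)) ^ (2 : ℝ)) ^ (1/2:ℝ) :=
              ENNReal.rpow_le_rpow h1 (by norm_num)
      have h2 := ENNReal.tsum_coe_ne_top_iff_summable.1 hG
      have h3 := NNReal.summable_coe.2 h2
      simpa [coe_nnnorm] using h3
    -- the partial sums converge to the image of the operator sum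
    have hS : HasSum (fun n : ℕ => T (Real.log ((n : ℝ) + 1)) f)
        ((∑' n : ℕ, T (Real.log ((n : ℝ) + 1))) f) :=
      (ContinuousLinearMap.apply ℂ (Lp ℂ 2 (weightedMeasure c)) f).hasSum hs2.hasSum
    set P : ℕ → Lp ℂ 2 (weightedMeasure c) :=
      fun N => ∑ k ∈ Finset.range N, T (Real.log ((k : ℝ) + 1)) f with hPdef
    set Sf : Lp ℂ 2 (weightedMeasure c) := (∑' n : ℕ, T (Real.log ((n : ℝ) + 1))) f with hSf
    have hPtend : Tendsto P atTop (𝓝 Sf) := hS.tendsto_sum_nat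
    have hPe : Tendsto (fun N => eLpNorm (⇑(P N) - ⇑Sf) 2 (weightedMeasure c)) atTop (𝓝 0) :=
      (Lp.tendsto_Lp_iff_tendsto_eLpNorm' P Sf).1 hPtend
    have hTIM : TendstoInMeasure (weightedMeasure c) (fun N => ⇑(P N)) atTop ⇑Sf :=
      tendstoInMeasure_of_tendsto_eLpNorm (p := 2) (by norm_num)
        (fun N => Lp.aestronglyMeasurable _) (Lp.aestronglyMeasurable _) hPe
    obtain ⟨ns, hns_mono, hns_ae⟩ := hTIM.exists_seq_tendsto_ae
    have hPcoe : ∀ N : ℕ, (⇑(P N) : ℝ → ℂ) =ᵐ[weightedMeasure c]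
        fun t => ∑ k ∈ Finset.range N, F k t := by
      intro N
      induction N with
      | zero => simp only [hPdef, Finset.range_zero, Finset.sum_empty]; exact Lp.coeFn_zero _ _ _
      | succ n ih =>
        have h1 : P (n + 1) = P n + T (Real.log ((n : ℝ) + 1)) f := by
          rw [hPdef]; simp [Finset.sum_range_succ]
        rw [h1]
        filter_upwards [Lp.coeFn_add (P n) (T (Real.log ((n : ℝ) + 1)) f), ih, hFcongr n]
          with t h1t h2t h3t
        simp only [h1t, Pi.add_apply, h2t, h3t, Finset.sum_range_succ]
    filter_upwards [hsummable, hns_ae, ae_all_iff.2 hPcoe] with t hsum htend hcoe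
    have h1 : Tendsto (fun i => ∑ k ∈ Finset.range (ns i), F k t) atTop (𝓝 (Sf t)) :=
      htend.congr fun i => hcoe (ns i)
    have h2 : Tendsto (fun i => ∑ k ∈ Finset.range (ns i), F k t) atTop
        (𝓝 (∑' n : ℕ, F n t)) :=
      (hsum.of_norm.hasSum.tendsto_sum_nat).comp hns_mono.tendsto_atTop
    exact tendsto_nhds_unique h1 h2
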